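/- arXiv:2209.13922 — 4 statements merged into one kernel-verified Lean document; each statement's English description precedes it below -/
import Mathlib

section
/- Let l ≥ 2. The centralizer of ι in the symmetric group on {1,…,2l} is generated by the transposition exchanging l and l+1, together with the permutations (i j)(ι(i) ι(j)) (the product of the transposition exchanging i and j with the transposition exchanging 2l+1−i and 2l+1−j) for all 1 ≤ i < j ≤ l. -/
noncomputable section

/-- The permutation `ι` of `{1,…,n}` given (1-based) by `i ↦ n + 1 - i`. -/
def iotaPerm (n : ℕ) : Equiv.Perm (Fin n) where
  toFun i := ⟨n - 1 - (i : ℕ), by have := i.isLt; omega⟩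
  invFun i := ⟨n - 1 - (i : ℕ), by have := i.isLt; omega⟩
  left_inv i := by have := i.isLt; apply Fin.ext; show n - 1 - (n - 1 - (i : ℕ)) = _; omega
  right_inv i := by have := i.isLt; apply Fin.ext; show n - 1 - (n - 1 - (i : ℕ)) = _; omega

end

namespace CentIotaAux

lemma iota_val {n : ℕ} (x : Fin n) : ((iotaPerm n x : Fin n) : ℕ) = n - 1 - (x : ℕ) := id rfl

lemma swap_apply_val {n : ℕ} (a b x : Fin n) :
    ((Equiv.swap a b x : Fin n) : ℕ) =
      if (x : ℕ) = (a : ℕ) then (b : ℕ) else if (x : ℕ) = (b : ℕ) then (a : ℕ) else (x : ℕ) := by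
  rw [Equiv.swap_apply_def]
  split_ifs with h1 h2 h3 h4 h5 <;> simp_all [Fin.ext_iff]

def genSet (l : ℕ) (hl : 2 ≤ l) : Set (Equiv.Perm (Fin (2 * l))) :=
  {Equiv.swap (⟨l - 1, (by omega : l - 1 < 2 * l + 0)⟩ : Fin (2 * l)) ⟨l, (by omega : l < 2 * l + 0)⟩} ∪
    {x : Equiv.Perm (Fin (2 * l)) | ∃ i j : Fin (2 * l), (i : ℕ) < (j : ℕ) ∧ (j : ℕ) < l ∧
      x = Equiv.swap i j * Equiv.swap (iotaPerm (2 * l) i) (iotaPerm (2 * l) j)}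

lemma tz_mem (l : ℕ) (hl : 2 ≤ l) (z : ℕ) (hz : z < l) :
    Equiv.swap (⟨z, by omega⟩ : Fin (2 * l)) ⟨2 * l - 1 - z, by omega⟩
      ∈ Subgroup.closure (genSet l hl) := by
  by_cases h : z = l - 1
  · have e1 : (⟨z, by omega⟩ : Fin (2 * l)) = ⟨l - 1, by omega⟩ := Fin.ext (by simp only [Fin.val_mk]; omega)
    have e2 : (⟨2 * l - 1 - z, by omega⟩ : Fin (2 * l)) = ⟨l, by omega⟩ := Fin.ext (by simp only [Fin.val_mk]; omega)
    rw [e1, e2]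
    exact Subgroup.subset_closure (Or.inl rfl)
  · -- z < l - 1
    have hbG : Equiv.swap (⟨z, by omega⟩ : Fin (2 * l)) ⟨l - 1, by omega⟩ *
        Equiv.swap (iotaPerm (2 * l) ⟨z, by omega⟩) (iotaPerm (2 * l) ⟨l - 1, by omega⟩)
        ∈ Subgroup.closure (genSet l hl) :=
      Subgroup.subset_closure (Or.inr ⟨⟨z, by omega⟩, ⟨l - 1, by omega⟩,
        by simp only [Fin.val_mk]; omega, by simp only [Fin.val_mk]; omega, rfl⟩)
    have hsG : Equiv.swap (⟨l - 1, by omega⟩ : Fin (2 * l)) ⟨l, by omega⟩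
        ∈ Subgroup.closure (genSet l hl) := Subgroup.subset_closure (Or.inl rfl)
    have key := Equiv.swap_apply_apply
      (Equiv.swap (⟨z, by omega⟩ : Fin (2 * l)) ⟨l - 1, by omega⟩ *
        Equiv.swap (iotaPerm (2 * l) ⟨z, by omega⟩) (iotaPerm (2 * l) ⟨l - 1, by omega⟩))
      (⟨l - 1, by omega⟩ : Fin (2 * l)) ⟨l, by omega⟩
    have e1 : (Equiv.swap (⟨z, by omega⟩ : Fin (2 * l)) ⟨l - 1, by omega⟩ *
        Equiv.swap (iotaPerm (2 * l) ⟨z, by omega⟩) (iotaPerm (2 * l) ⟨l - 1, by omega⟩))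
        (⟨l - 1, by omega⟩ : Fin (2 * l)) = ⟨z, by omega⟩ := by
      apply Fin.ext
      simp only [Equiv.Perm.mul_apply, swap_apply_val, iota_val, Fin.val_mk]
      split_ifs <;> omega
    have e2 : (Equiv.swap (⟨z, by omega⟩ : Fin (2 * l)) ⟨l - 1, by omega⟩ *
        Equiv.swap (iotaPerm (2 * l) ⟨z, by omega⟩) (iotaPerm (2 * l) ⟨l - 1, by omega⟩))
        (⟨l, by omega⟩ : Fin (2 * l)) = ⟨2 * l - 1 - z, by omega⟩ := by
      apply Fin.ext
      simp only [Equiv.Perm.mul_apply, swap_apply_val, iota_val, Fin.val_mk]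
      split_ifs <;> omega
    rw [e1, e2] at key
    rw [key]
    exact Subgroup.mul_mem _ (Subgroup.mul_mem _ hbG hsG) (Subgroup.inv_mem _ hbG)

lemma P_pair (l : ℕ) (a b : Fin (2 * l)) (ha : (a : ℕ) < l) (hb : (b : ℕ) < l) :
    ∀ x, (Equiv.swap a b * Equiv.swap (iotaPerm (2*l) a) (iotaPerm (2*l) b)) (iotaPerm (2*l) x)
      = iotaPerm (2*l) ((Equiv.swap a b * Equiv.swap (iotaPerm (2*l) a) (iotaPerm (2*l) b)) x) := by
  intro x
  have hx := x.isLt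
  apply Fin.ext
  simp only [Equiv.Perm.mul_apply, swap_apply_val, iota_val]
  split_ifs <;> omega

lemma P_single (l : ℕ) (z : ℕ) (hz : z < 2 * l) :
    ∀ x, (Equiv.swap (⟨z, hz⟩ : Fin (2*l)) ⟨2*l-1-z, by omega⟩) (iotaPerm (2*l) x)
      = iotaPerm (2*l) ((Equiv.swap (⟨z, hz⟩ : Fin (2*l)) ⟨2*l-1-z, by omega⟩) x) := by
  intro x
  have hx := x.isLt
  apply Fin.ext
  simp only [swap_apply_val, iota_val, Fin.val_mk]
  split_ifs <;> omega

lemma main_ind (l : ℕ) (hl : 2 ≤ l) : ∀ d : ℕ, ∀ σ : Equiv.Perm (Fin (2 * l)),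
    (∀ x, σ (iotaPerm (2 * l) x) = iotaPerm (2 * l) (σ x)) →
    (∀ k : Fin (2 * l), (k : ℕ) + d < l → σ k = k) →
    σ ∈ Subgroup.closure (genSet l hl) := by
  intro d
  induction d with
  | zero =>
    intro σ hcomm hfix
    have : σ = 1 := by
      apply Equiv.ext
      intro x
      rcases Nat.lt_or_ge (x : ℕ) l with hx | hx
      · simpa using hfix x (by omega)
      · have hx2 := x.isLt
        have hk : ((iotaPerm (2*l) x : Fin (2*l)) : ℕ) + 0 < l := by
          rw [iota_val]; omega
        have h1 := hfix _ hk
        have h2 := hcomm (iotaPerm (2*l) x)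
        rw [h1] at h2
        have h3 : iotaPerm (2*l) (iotaPerm (2*l) x) = x := (iotaPerm (2*l)).left_inv x
        rw [h3] at h2
        simpa using h2
    rw [this]; exact Subgroup.one_mem _
  | succ d ih =>
    intro σ hcomm hfix
    -- i := l - (d+1)
    have hIlt : l - (d + 1) < 2 * l := by omega
    set I : Fin (2 * l) := ⟨l - (d + 1), hIlt⟩ with hI
    have hIval : (I : ℕ) = l - (d + 1) := rfl
    have hfixι : ∀ k : Fin (2 * l), (k : ℕ) + (d + 1) < l → σ (iotaPerm (2*l) k) = iotaPerm (2*l) k := by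
      intro k hk
      rw [hcomm k, hfix k hk]
    -- lower bound for images of I under centralizing perms fixing below i
    have lowbd : ∀ τ : Equiv.Perm (Fin (2*l)),
        (∀ k : Fin (2 * l), (k : ℕ) + (d + 1) < l → τ k = k) → l - (d+1) ≤ ((τ I : Fin (2*l)) : ℕ) := by
      intro τ hf
      by_contra hcon
      push_neg at hcon
      have h1 := hf (τ I) (by omega)
      have h2 := τ.injective h1
      rw [h2] at hcon
      omega
    -- step2
    have step2 : ∀ σ' : Equiv.Perm (Fin (2 * l)),
        (∀ x, σ' (iotaPerm (2 * l) x) = iotaPerm (2 * l) (σ' x)) →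
        (∀ k : Fin (2 * l), (k : ℕ) + (d + 1) < l → σ' k = k) →
        ((σ' I : Fin (2*l)) : ℕ) < l →
        σ' ∈ Subgroup.closure (genSet l hl) := by
      intro σ' hc hf hlt
      have hzlow := lowbd σ' hf
      by_cases hz : ((σ' I : Fin (2*l)) : ℕ) = l - (d + 1)
      · apply ih σ' hc
        intro k hk
        rcases Nat.lt_or_ge ((k : ℕ) + (d + 1)) l with hk2 | hk2
        · exact hf k hk2
        · have hkI : k = I := Fin.ext (by simp [hIval]; omega)
          rw [hkI]
          exact Fin.ext hz
      · -- l - (d+1) < σ' I < l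
        have hzlt : l - (d + 1) < ((σ' I : Fin (2*l)) : ℕ) := lt_of_le_of_ne hzlow (Ne.symm hz)
        set Z : Fin (2 * l) := σ' I with hZ
        have hbG : Equiv.swap I Z * Equiv.swap (iotaPerm (2*l) I) (iotaPerm (2*l) Z)
            ∈ Subgroup.closure (genSet l hl) :=
          Subgroup.subset_closure (Or.inr ⟨I, Z, by omega, hlt, rfl⟩)
        have hbP := P_pair l I Z (by omega) hlt
        have hIlt' := I.isLt
        have hbσ : Equiv.swap I Z * Equiv.swap (iotaPerm (2*l) I) (iotaPerm (2*l) Z) * σ'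
            ∈ Subgroup.closure (genSet l hl) := by
          apply ih
          · intro x
            simp only [Equiv.Perm.mul_apply] at hbP ⊢
            rw [hc x]
            exact hbP (σ' x)
          · intro k hk
            simp only [Equiv.Perm.mul_apply]
            rcases Nat.lt_or_ge ((k : ℕ) + (d + 1)) l with hk2 | hk2
            · rw [hf k hk2]
              apply Fin.ext
              have hklt := k.isLt
              simp only [swap_apply_val, iota_val]
              split_ifs <;> omega
            · have hkI : k = I := Fin.ext (by simp [hIval]; omega)
              rw [hkI, ← hZ]
              apply Fin.ext
              have hZlt := Z.isLt
              simp only [swap_apply_val, iota_val]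
              split_ifs <;> omega
        have : σ' = (Equiv.swap I Z * Equiv.swap (iotaPerm (2*l) I) (iotaPerm (2*l) Z))⁻¹ *
            (Equiv.swap I Z * Equiv.swap (iotaPerm (2*l) I) (iotaPerm (2*l) Z) * σ') := by
          rw [← mul_assoc, inv_mul_cancel, one_mul]
        rw [this]
        exact Subgroup.mul_mem _ (Subgroup.inv_mem _ hbG) hbσ
    -- now case on σ I
    have hyhigh : ((σ I : Fin (2*l)) : ℕ) ≤ 2 * l - 1 - (l - (d + 1)) := by
      by_contra hcon
      push_neg at hcon
      have hIy := (σ I).isLt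
      have hk : ((iotaPerm (2*l) (σ I) : Fin (2*l)) : ℕ) + (d + 1) < l := by
        rw [iota_val]; omega
      have h1 := hfixι _ hk
      have h3 : iotaPerm (2*l) (iotaPerm (2*l) (σ I)) = σ I := (iotaPerm (2*l)).left_inv _
      rw [h3] at h1
      have h2 := σ.injective h1
      have : ((σ I : Fin (2*l)) : ℕ) = l - (d+1) := by rw [h2]
      omega
    rcases Nat.lt_or_ge ((σ I : Fin (2*l)) : ℕ) l with hy | hy
    · exact step2 σ hcomm hfix hy
    · -- σ I ≥ l : premultiply by t_z, z = 2l-1-(σ I)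
      have hIy := (σ I).isLt
      have hzl : 2 * l - 1 - ((σ I : Fin (2*l)) : ℕ) < l := by omega
      have htG := tz_mem l hl (2 * l - 1 - ((σ I : Fin (2*l)) : ℕ)) hzl
      have htP := P_single l (2 * l - 1 - ((σ I : Fin (2*l)) : ℕ)) (by omega)
      set t : Equiv.Perm (Fin (2*l)) :=
        Equiv.swap (⟨2 * l - 1 - ((σ I : Fin (2*l)) : ℕ), by omega⟩ : Fin (2*l))
          ⟨2 * l - 1 - (2 * l - 1 - ((σ I : Fin (2*l)) : ℕ)), by omega⟩ with ht
      have htσ : t * σ ∈ Subgroup.closure (genSet l hl) := by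
        apply step2 (t * σ)
        · intro x
          simp only [Equiv.Perm.mul_apply]
          rw [hcomm x, ht]
          exact htP (σ x)
        · intro k hk
          simp only [Equiv.Perm.mul_apply]
          rw [hfix k hk]
          apply Fin.ext
          have hklt := k.isLt
          simp only [ht, swap_apply_val, Fin.val_mk]
          split_ifs <;> omega
        · -- (t * σ) I = z
          have : ((t (σ I) : Fin (2*l)) : ℕ) = 2 * l - 1 - ((σ I : Fin (2*l)) : ℕ) := by
            simp only [ht, swap_apply_val, Fin.val_mk]
            split_ifs <;> omega
          simp only [Equiv.Perm.mul_apply]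
          rw [this]; omega
      have hσeq : σ = t⁻¹ * (t * σ) := by rw [← mul_assoc, inv_mul_cancel, one_mul]
      rw [hσeq]
      exact Subgroup.mul_mem _ (Subgroup.inv_mem _ htG) htσ


lemma closure_le_centralizer (l : ℕ) (hl : 2 ≤ l) :
    Subgroup.closure (genSet l hl) ≤ Subgroup.centralizer {iotaPerm (2 * l)} := by
  rw [Subgroup.closure_le]
  intro x hx
  have comm_of : (∀ y, x (iotaPerm (2*l) y) = iotaPerm (2*l) (x y)) →
      x ∈ Subgroup.centralizer {iotaPerm (2 * l)} := by
    intro h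
    rw [Subgroup.mem_centralizer_iff]
    intro g hg
    rw [Set.mem_singleton_iff] at hg
    subst hg
    apply Equiv.ext
    intro y
    simp only [Equiv.Perm.mul_apply]
    exact (h y).symm
  rcases hx with h | ⟨i, j, h1, h2, rfl⟩
  · rw [Set.mem_singleton_iff] at h
    subst h
    apply comm_of
    have e2 : (⟨l, by omega⟩ : Fin (2 * l)) = ⟨2 * l - 1 - (l - 1), by omega⟩ :=
      Fin.ext (by simp only [Fin.val_mk]; omega)
    rw [e2]
    exact P_single l (l - 1) (by omega)
  · exact comm_of (P_pair l i j (lt_trans h1 h2) h2)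

end CentIotaAux

/-- For `l ≥ 2`, the centralizer of `ι` in the symmetric group on `{1,…,2l}`
is generated by the transposition `(l, l+1)` together with the permutations
`(i j)(ι(i) ι(j))` for `1 ≤ i < j ≤ l`. -/
theorem centralizer_iota_generators (l : ℕ) (hl : 2 ≤ l) :
    (Subgroup.centralizer {iotaPerm (2 * l)} : Subgroup (Equiv.Perm (Fin (2 * l)))) =
      Subgroup.closure
        ({Equiv.swap (⟨l - 1, by omega⟩ : Fin (2 * l)) ⟨l, by omega⟩} ∪
          {x : Equiv.Perm (Fin (2 * l)) | ∃ i j : Fin (2 * l), (i : ℕ) < (j : ℕ) ∧ (j : ℕ) < l ∧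
            x = Equiv.swap i j * Equiv.swap (iotaPerm (2 * l) i) (iotaPerm (2 * l) j)}) := by
  show _ = Subgroup.closure (CentIotaAux.genSet l hl)
  apply le_antisymm
  · intro σ hσ
    have h := Subgroup.mem_centralizer_iff.mp hσ (iotaPerm (2 * l)) rfl
    apply CentIotaAux.main_ind l hl (2 * l) σ
    · intro x
      have := Equiv.ext_iff.mp h x
      simpa [Equiv.Perm.mul_apply] using this.symm
    · intro k hk
      exact absurd hk (by omega)
  · exact CentIotaAux.closure_le_centralizer l hl
end

section
/- Let l ≥ 1 and let σ be a permutation of {1,…,2l} commuting with ι. Then the sign of σ equals (−1)^m, where m is the number of indices i with 1 ≤ i ≤ l and σ(i) ≥ l+1. -/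
lemma iotaPerm_apply (n : ℕ) (i : Fin n) : ((iotaPerm n i : Fin n) : ℕ) = n - 1 - (i : ℕ) := rfl

lemma iotaPerm_invol (n : ℕ) (i : Fin n) : iotaPerm n (iotaPerm n i) = i := by
  have := i.isLt; apply Fin.ext; simp [iotaPerm_apply]; omega

lemma iotaPerm_mul_self (n : ℕ) : iotaPerm n * iotaPerm n = 1 := by
  ext i; simp [Equiv.Perm.mul_apply, iotaPerm_invol]

-- key auxiliary induction
lemma aux_sign (l : ℕ) (hl : 1 ≤ l) : ∀ m : ℕ, ∀ σ : Equiv.Perm (Fin (2 * l)),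
    σ * iotaPerm (2 * l) = iotaPerm (2 * l) * σ →
    (Finset.univ.filter fun i : Fin (2 * l) =>
        (i : ℕ) < l ∧ l ≤ ((σ i : Fin (2 * l)) : ℕ)).card = m →
    Equiv.Perm.sign σ = (-1) ^ m := by
  intro m
  induction m with
  | zero =>
    intro σ hσ hcard
    -- flip-free: σ preserves the first half
    have hfree : ∀ i : Fin (2 * l), (i : ℕ) < l → ((σ i : Fin (2 * l)) : ℕ) < l := by
      intro i hi
      by_contra h
      have : i ∈ Finset.univ.filter fun i : Fin (2 * l) =>
          (i : ℕ) < l ∧ l ≤ ((σ i : Fin (2 * l)) : ℕ) := by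
        simp [hi]; omega
      rw [Finset.card_eq_zero] at hcard
      simp [hcard] at this
    have hcomm : ∀ i : Fin (2 * l), σ (iotaPerm (2 * l) i) = iotaPerm (2 * l) (σ i) := by
      intro i
      have := congrFun (congrArg (fun f => f.toFun) hσ) i
      simpa [Equiv.Perm.mul_apply] using this
    have hge : ∀ i : Fin (2 * l), l ≤ (i : ℕ) → l ≤ ((σ i : Fin (2 * l)) : ℕ) := by
      intro i hi
      have h1 : ((iotaPerm (2 * l) i : Fin (2 * l)) : ℕ) < l := by
        have := i.isLt; rw [iotaPerm_apply]; omega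
      have h2 := hfree _ h1
      have h3 : σ i = iotaPerm (2 * l) (σ (iotaPerm (2 * l) i)) := by
        rw [← hcomm, iotaPerm_invol]
      rw [h3, iotaPerm_apply]
      have := (σ (iotaPerm (2 * l) i)).isLt
      omega
    set p : Fin (2 * l) → Prop := fun i => (i : ℕ) < l with hp
    have hpres : ∀ i, p i ↔ p (σ i) := by
      intro i
      constructor
      · exact hfree i
      · intro h
        by_contra hi
        exact absurd (hge i (by omega)) (by omega)
    set σ₁ : Equiv.Perm (Fin (2 * l)) :=
      Equiv.Perm.ofSubtype (σ.subtypePerm (fun i => (hpres i).symm)) with hσ₁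
    have hσ₁lt : ∀ i : Fin (2 * l), (i : ℕ) < l → σ₁ i = σ i := by
      intro i hi
      rw [hσ₁, Equiv.Perm.ofSubtype_apply_of_mem (σ.subtypePerm (fun i => (hpres i).symm)) hi]
      rfl
    have hσ₁ge : ∀ i : Fin (2 * l), l ≤ (i : ℕ) → σ₁ i = i := by
      intro i hi
      exact Equiv.Perm.ofSubtype_apply_of_not_mem (σ.subtypePerm (fun i => (hpres i).symm)) (by simp [hp]; omega)
    have hdecomp : σ = σ₁ * (iotaPerm (2 * l) * σ₁ * (iotaPerm (2 * l))⁻¹) := by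
      ext i
      have hinv : (iotaPerm (2 * l))⁻¹ = iotaPerm (2 * l) := by
        rw [eq_comm, eq_inv_iff_mul_eq_one, iotaPerm_mul_self]
      rw [hinv]
      simp only [Equiv.Perm.mul_apply]
      rcases lt_or_ge (i : ℕ) l with hi | hi
      · have h1 : l ≤ ((iotaPerm (2 * l) i : Fin (2 * l)) : ℕ) := by
          have := i.isLt; rw [iotaPerm_apply]; omega
        rw [hσ₁ge _ h1, iotaPerm_invol, hσ₁lt _ hi]
      · have h1 : ((iotaPerm (2 * l) i : Fin (2 * l)) : ℕ) < l := by
          have := i.isLt; rw [iotaPerm_apply]; omega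
        rw [hσ₁lt _ h1, ← hcomm, iotaPerm_invol, hσ₁ge _ (hge i hi)]
    rw [hdecomp, map_mul, map_mul, map_mul, map_inv]
    have hs1 : Equiv.Perm.sign σ₁ * Equiv.Perm.sign σ₁ = 1 := Int.units_mul_self _
    have : Equiv.Perm.sign (iotaPerm (2 * l)) * Equiv.Perm.sign σ₁ *
        (Equiv.Perm.sign (iotaPerm (2 * l)))⁻¹ = Equiv.Perm.sign σ₁ := by
      exact mul_inv_cancel_comm _ _
    rw [this, pow_zero, hs1]
  | succ m ih =>
    intro σ hσ hcard
    have hcomm : ∀ i : Fin (2 * l), σ (iotaPerm (2 * l) i) = iotaPerm (2 * l) (σ i) := by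
      intro i
      have := congrFun (congrArg (fun f => f.toFun) hσ) i
      simpa [Equiv.Perm.mul_apply] using this
    have hpos : 0 < (Finset.univ.filter fun i : Fin (2 * l) =>
        (i : ℕ) < l ∧ l ≤ ((σ i : Fin (2 * l)) : ℕ)).card := by rw [hcard]; omega
    obtain ⟨i, hi⟩ := Finset.card_pos.mp hpos
    have hi' := Finset.mem_filter.mp hi
    have hil := hi'.2.1
    have hσil := hi'.2.2
    set a : Fin (2 * l) := σ i with ha
    have hιa : ((iotaPerm (2 * l) a : Fin (2 * l)) : ℕ) < l := by
      have := a.isLt; rw [iotaPerm_apply]; omega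
    have hane : a ≠ iotaPerm (2 * l) a := by
      intro h
      rw [← h] at hιa; omega
    set t : Equiv.Perm (Fin (2 * l)) := Equiv.swap a (iotaPerm (2 * l) a) with hT
    have htcomm : t * iotaPerm (2 * l) = iotaPerm (2 * l) * t := by
      rw [hT, Equiv.mul_swap_eq_swap_mul, iotaPerm_invol, Equiv.swap_comm a]
    set σ' : Equiv.Perm (Fin (2 * l)) := t * σ with hσ'
    have hc' : σ' * iotaPerm (2 * l) = iotaPerm (2 * l) * σ' := by
      rw [hσ', mul_assoc, hσ, ← mul_assoc, htcomm, mul_assoc]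
    have hval : ∀ j : Fin (2 * l), (j : ℕ) < l → j ≠ i → σ' j = σ j := by
      intro j hjl hji
      have h1 : σ j ≠ a := by
        intro h
        exact hji (σ.injective (h.trans ha))
      have h2 : σ j ≠ iotaPerm (2 * l) a := by
        intro h
        have heq : σ (iotaPerm (2 * l) i) = iotaPerm (2 * l) a := by
          rw [hcomm, ← ha]
        have hj : j = iotaPerm (2 * l) i := σ.injective (h.trans heq.symm)
        have : l ≤ ((iotaPerm (2 * l) i : Fin (2 * l)) : ℕ) := by
          rw [iotaPerm_apply]; omega
        rw [hj] at hjl; omega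
      show t (σ j) = σ j
      rw [hT]
      exact Equiv.swap_apply_of_ne_of_ne h1 h2
    have hvi : ((σ' i : Fin (2 * l)) : ℕ) < l := by
      show ((t (σ i) : Fin (2 * l)) : ℕ) < l
      rw [hT, ← ha, Equiv.swap_apply_left]
      exact hιa
    have hfilter : (Finset.univ.filter fun j : Fin (2 * l) =>
        (j : ℕ) < l ∧ l ≤ ((σ' j : Fin (2 * l)) : ℕ)) =
        (Finset.univ.filter fun j : Fin (2 * l) =>
        (j : ℕ) < l ∧ l ≤ ((σ j : Fin (2 * l)) : ℕ)).erase i := by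
      ext j
      simp only [Finset.mem_erase, Finset.mem_filter, Finset.mem_univ, true_and]
      by_cases hji : j = i
      · subst hji
        constructor
        · rintro ⟨-, h⟩; omega
        · rintro ⟨h, -⟩; exact absurd rfl h
      · by_cases hjl : (j : ℕ) < l
        · rw [hval j hjl hji]
          exact ⟨fun h => ⟨hji, h.1, h.2⟩, fun h => ⟨h.2.1, h.2.2⟩⟩
        · constructor
          · rintro ⟨h, -⟩; exact absurd h hjl
          · rintro ⟨-, h, -⟩; exact absurd h hjl
    have hcard' : (Finset.univ.filter fun j : Fin (2 * l) =>
        (j : ℕ) < l ∧ l ≤ ((σ' j : Fin (2 * l)) : ℕ)).card = m := by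
      rw [hfilter, Finset.card_erase_of_mem hi, hcard]
      omega
    have hsign' := ih σ' hc' hcard'
    have hσeq : σ = t * σ' := by
      rw [hσ', ← mul_assoc, hT, Equiv.swap_mul_self, one_mul]
    rw [hσeq, map_mul, hsign', hT, Equiv.Perm.sign_swap hane, pow_succ, mul_comm]

/-- If `σ` is a permutation of `{1,…,2l}` commuting with `ι`, then
`sign σ = (−1)^m` where `m` is the number of `i` with `1 ≤ i ≤ l` and `σ(i) ≥ l + 1`. -/
theorem sign_of_centralizing_perm (l : ℕ) (hl : 1 ≤ l) (σ : Equiv.Perm (Fin (2 * l)))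
    (hσ : σ * iotaPerm (2 * l) = iotaPerm (2 * l) * σ) :
    Equiv.Perm.sign σ =
      (-1) ^ (Finset.univ.filter fun i : Fin (2 * l) =>
        (i : ℕ) < l ∧ l ≤ ((σ i : Fin (2 * l)) : ℕ)).card := by
  exact aux_sign l hl _ σ hσ rfl
end

section
/- Let F be an algebraically closed field and l ≥ 2. Let Z := {λ·I : λ ∈ F^×} be the subgroup of scalar matrices in GL_l(F), let H := GL_l(F)/Z with quotient map π, let T := π(D) where D is the subgroup of invertible diagonal matrices, and let W̌ := π(P) where P is the subgroup of permutation matrices in GL_l(F). Then the normalizer of T in H is the internal semidirect product of T by W̌; that is: W̌ ⊆ N_H(T), T ∩ W̌ = {1}, and every element of N_H(T) can be written as t·w with t ∈ T and w ∈ W̌. -/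
open Matrix

noncomputable section

variable (l : ℕ) (F : Type) [Field F]

/-- The permutation matrix of `σ`, with `(i,j)` entry `1` iff `i = σ j`. -/
def permMat (σ : Equiv.Perm (Fin l)) : Matrix (Fin l) (Fin l) F :=
  Matrix.of fun i j => if i = σ j then 1 else 0

lemma permMat_mul (σ τ : Equiv.Perm (Fin l)) :
    permMat l F σ * permMat l F τ = permMat l F (σ * τ) := by
  ext i j
  simp only [permMat, Matrix.mul_apply, Matrix.of_apply]
  rw [Finset.sum_eq_single (τ j)]
  · simp [Equiv.Perm.mul_apply]; congr
  · intro k _ hk; simp [hk]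
  · intro h; simp at h

lemma permMat_one : permMat l F 1 = 1 := by
  ext i j
  simp [permMat, Matrix.one_apply]; congr

/-- The permutation matrix of `σ` as an element of `GL_l(F)`. -/
def permGL (σ : Equiv.Perm (Fin l)) : GL (Fin l) F :=
  ⟨permMat l F σ, permMat l F σ⁻¹,
    by rw [permMat_mul]; simp [permMat_one],
    by rw [permMat_mul]; simp [permMat_one]⟩

/-- The subgroup `Z` of scalar matrices `λ·I`, `λ ∈ F^×`, in `GL_l(F)`. -/
def scalarZ : Subgroup (GL (Fin l) F) where
  carrier := {x | ∃ c : Fˣ, (x : Matrix (Fin l) (Fin l) F) = (c : F) • (1 : Matrix (Fin l) (Fin l) F)}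
  one_mem' := ⟨1, by simp⟩
  mul_mem' := by
    rintro a b ⟨c, hc⟩ ⟨d, hd⟩
    refine ⟨c * d, ?_⟩
    rw [Units.val_mul, hc, hd, smul_mul_smul_comm, one_mul]
    push_cast
    rfl
  inv_mem' := by
    rintro a ⟨c, hc⟩
    refine ⟨c⁻¹, ?_⟩
    have hau : a = ⟨(c : F) • (1 : Matrix (Fin l) (Fin l) F),
        ((c⁻¹ : Fˣ) : F) • (1 : Matrix (Fin l) (Fin l) F),
        by rw [smul_mul_smul_comm, one_mul, ← Units.val_mul, mul_inv_cancel]; simp,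
        by rw [smul_mul_smul_comm, one_mul, ← Units.val_mul, inv_mul_cancel]; simp⟩ :=
      Units.ext hc
    rw [hau]; rfl

instance scalarZ_normal : (scalarZ l F).Normal := by
  constructor
  rintro x ⟨c, hc⟩ g
  refine ⟨c, ?_⟩
  rw [Units.val_mul, Units.val_mul, hc, mul_smul_comm, mul_one, smul_mul_assoc, Units.mul_inv]

/-- The projective general linear group `H := GL_l(F)/Z`. -/
def PGLq : Type := GL (Fin l) F ⧸ scalarZ l F

instance : Group (PGLq l F) := inferInstanceAs (Group (GL (Fin l) F ⧸ scalarZ l F))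

/-- The quotient map `π : GL_l(F) → H`. -/
def piPGL : GL (Fin l) F →* PGLq l F := QuotientGroup.mk' (scalarZ l F)

/-- The subgroup `D` of invertible diagonal matrices in `GL_l(F)`. -/
def diagGL : Subgroup (GL (Fin l) F) where
  carrier := {x | (x : Matrix (Fin l) (Fin l) F).IsDiag}
  one_mem' := Matrix.isDiag_one
  mul_mem' := by
    intro a b haD hbD
    simp only [Set.mem_setOf_eq] at haD hbD ⊢
    rw [Units.val_mul, ← haD.diagonal_diag, ← hbD.diagonal_diag, diagonal_mul_diagonal]
    exact isDiag_diagonal _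
  inv_mem' := by
    intro a haD
    simp only [Set.mem_setOf_eq] at haD ⊢
    rw [Matrix.coe_units_inv, ← haD.diagonal_diag, inv_diagonal]
    exact isDiag_diagonal _

/-- The subgroup `P` of permutation matrices in `GL_l(F)`. -/
def permSub : Subgroup (GL (Fin l) F) where
  carrier := {x | ∃ σ : Equiv.Perm (Fin l), (x : Matrix (Fin l) (Fin l) F) = permMat l F σ}
  one_mem' := ⟨1, by rw [permMat_one]; rfl⟩
  mul_mem' := by
    rintro a b ⟨σ, ha⟩ ⟨τ, hb⟩
    exact ⟨σ * τ, by rw [Units.val_mul, ha, hb, permMat_mul]⟩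
  inv_mem' := by
    rintro a ⟨σ, ha⟩
    have hau : a = permGL l F σ := Units.ext ha
    exact ⟨σ⁻¹, by rw [hau]; rfl⟩

/-- `T := π(D)`. -/
def Tpgl : Subgroup (PGLq l F) := (diagGL l F).map (piPGL l F)

/-- `W̌ := π(P)`. -/
def Wpgl : Subgroup (PGLq l F) := (permSub l F).map (piPGL l F)

end

section Aux

open Matrix

variable {l : ℕ} {F : Type} [Field F]

lemma mul_permMat_apply (M : Matrix (Fin l) (Fin l) F) (σ : Equiv.Perm (Fin l)) (i j : Fin l) :
    (M * permMat l F σ) i j = M i (σ j) := by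
  simp only [permMat, Matrix.mul_apply, Matrix.of_apply, mul_ite, mul_one, mul_zero]
  rw [Finset.sum_eq_single (σ j)]
  · simp
  · intro k _ hk; simp [hk]
  · simp

lemma permMat_mul_apply (M : Matrix (Fin l) (Fin l) F) (σ : Equiv.Perm (Fin l)) (i j : Fin l) :
    (permMat l F σ * M) i j = M (σ⁻¹ i) j := by
  simp only [permMat, Matrix.mul_apply, Matrix.of_apply, ite_mul, one_mul, zero_mul]
  rw [Finset.sum_eq_single (σ⁻¹ i)]
  · simp
  · intro k _ hk
    have : i ≠ σ k := fun h => hk (by rw [h, Equiv.Perm.inv_def, Equiv.symm_apply_apply])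
    simp [this]
  · simp

lemma permGL_inv (σ : Equiv.Perm (Fin l)) : (permGL l F σ)⁻¹ = permGL l F σ⁻¹ :=
  Units.ext rfl

lemma mem_diagGL_iff {a : GL (Fin l) F} :
    a ∈ diagGL l F ↔ (↑a : Matrix (Fin l) (Fin l) F).IsDiag := Iff.rfl

lemma perm_conj_diag (σ : Equiv.Perm (Fin l)) {d : GL (Fin l) F} (hd : d ∈ diagGL l F) :
    permGL l F σ * d * (permGL l F σ)⁻¹ ∈ diagGL l F := by
  rw [mem_diagGL_iff]
  intro i j hij
  have hval : (↑(permGL l F σ * d * (permGL l F σ)⁻¹) : Matrix (Fin l) (Fin l) F)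
      = permMat l F σ * (↑d : Matrix (Fin l) (Fin l) F) * permMat l F σ⁻¹ := by
    rw [permGL_inv, Units.val_mul, Units.val_mul]; rfl
  rw [hval, mul_permMat_apply, permMat_mul_apply]
  exact (mem_diagGL_iff.mp hd) fun h => hij (σ⁻¹.injective h)

lemma diag_of_mem_T {a : GL (Fin l) F} (h : piPGL l F a ∈ Tpgl l F) :
    (↑a : Matrix (Fin l) (Fin l) F).IsDiag := by
  obtain ⟨d, hd, hda⟩ := h
  obtain ⟨z, ⟨cz, hcz⟩, hz⟩ := (QuotientGroup.mk'_eq_mk' (N := scalarZ l F)).mp hda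
  rw [← hz, Units.val_mul, hcz, mul_smul_comm, mul_one]
  exact hd.smul (cz : F)

end Aux

/-- For `F` algebraically closed and `l ≥ 2`, in `H = PGL_l(F)` the
normalizer of `T = π(D)` is the internal semidirect product of `T` by `W̌ = π(P)`. -/
theorem pgl_normalizer_torus_semidirect
    (F : Type) [Field F] [IsAlgClosed F] (l : ℕ) (hl : 2 ≤ l) :
    Wpgl l F ≤ Subgroup.normalizer (Tpgl l F : Set (PGLq l F)) ∧
    Tpgl l F ⊓ Wpgl l F = ⊥ ∧
    ∀ x ∈ Subgroup.normalizer (Tpgl l F : Set (PGLq l F)), ∃ t ∈ Tpgl l F, ∃ w ∈ Wpgl l F, x = t * w := by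
  refine ⟨?_, ?_, ?_⟩
  · -- W̌ ≤ N(T)
    rintro x ⟨p, ⟨σ, hpσ⟩, rfl⟩
    have hp : p = permGL l F σ := Units.ext hpσ
    subst hp
    rw [Subgroup.mem_normalizer_iff]
    intro h
    constructor
    · rintro ⟨d, hd, rfl⟩
      exact ⟨permGL l F σ * d * (permGL l F σ)⁻¹, perm_conj_diag σ hd,
        by rw [_root_.map_mul, _root_.map_mul, _root_.map_inv]⟩
    · rintro ⟨d, hd, hel⟩
      refine ⟨(permGL l F σ)⁻¹ * d * permGL l F σ, ?_, ?_⟩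
      · have := perm_conj_diag σ⁻¹ hd
        rwa [permGL_inv, inv_inv] at this
      · rw [_root_.map_mul, _root_.map_mul, _root_.map_inv, hel]
        group
  · -- T ⊓ W̌ = ⊥
    rw [eq_bot_iff]
    rintro x ⟨⟨d, hd, hdx⟩, ⟨p, ⟨σ, hpσ⟩, hpx⟩⟩
    have hpT : piPGL l F p ∈ Tpgl l F := by rw [hpx]; exact ⟨d, hd, hdx⟩
    have hpd : (↑p : Matrix (Fin l) (Fin l) F).IsDiag := diag_of_mem_T hpT
    have hσ : σ = 1 := by
      apply Equiv.ext
      intro j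
      show σ j = j
      by_contra hne
      have h0 := hpd (show σ j ≠ j from hne)
      rw [hpσ] at h0
      simp [permMat] at h0
    have hp1 : p = 1 := Units.ext (by rw [hpσ, hσ, permMat_one]; rfl)
    rw [← hpx, hp1, _root_.map_one]
    exact Subgroup.one_mem _
  · -- N(T) ⊆ T ⋅ W̌
    intro x hx
    obtain ⟨g, rfl⟩ := QuotientGroup.mk'_surjective (scalarZ l F) x
    replace hx := Subgroup.mem_normalizer_iff.mp hx
    -- choose injective nonzero diagonal entries
    have hinf : ({(0 : F)}ᶜ : Set F).Infinite := (Set.finite_singleton 0).infinite_compl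
    have : Infinite ({(0 : F)}ᶜ : Set F) := hinf.to_subtype
    set emb := Infinite.natEmbedding ({(0 : F)}ᶜ : Set F) with hemb
    set c : Fin l → F := fun i => (emb (i : ℕ) : F) with hc
    have hcne : ∀ i, c i ≠ 0 := fun i => (emb (i : ℕ)).2
    have hcinj : Function.Injective c := by
      intro i j hij
      exact Fin.val_injective (emb.injective (Subtype.val_injective hij))
    have hcc : (fun i => c i * (c i)⁻¹) = fun _ => (1 : F) :=
      funext fun i => mul_inv_cancel₀ (hcne i)
    have hcc' : (fun i => (c i)⁻¹ * c i) = fun _ => (1 : F) :=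
      funext fun i => inv_mul_cancel₀ (hcne i)
    set dU : GL (Fin l) F := ⟨diagonal c, diagonal (fun i => (c i)⁻¹),
      by rw [diagonal_mul_diagonal, hcc, diagonal_one],
      by rw [diagonal_mul_diagonal, hcc', diagonal_one]⟩ with hdU
    have hdT : piPGL l F dU ∈ Tpgl l F := ⟨dU, isDiag_diagonal c, rfl⟩
    have hconj : piPGL l F g * piPGL l F dU * (piPGL l F g)⁻¹ ∈ Tpgl l F := (hx _).mp hdT
    have hconj2 : piPGL l F (g * dU * g⁻¹) ∈ Tpgl l F := by
      rw [_root_.map_mul, _root_.map_mul, _root_.map_inv]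
      exact hconj
    have hE : (↑(g * dU * g⁻¹) : Matrix (Fin l) (Fin l) F).IsDiag := diag_of_mem_T hconj2
    set M : Matrix (Fin l) (Fin l) F := (↑g : Matrix (Fin l) (Fin l) F) with hM
    set e : Fin l → F := (↑(g * dU * g⁻¹) : Matrix (Fin l) (Fin l) F).diag with he
    have hME : M * diagonal c = diagonal e * M := by
      have hu : g * dU = (g * dU * g⁻¹) * g := by group
      have := congrArg (Units.val) hu
      rw [Units.val_mul, Units.val_mul] at this
      rw [he, hE.diagonal_diag]
      exact this
    have key : ∀ i j, M i j ≠ 0 → e i = c j := by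
      intro i j hMij
      have h1 := congrFun (congrFun hME i) j
      rw [mul_diagonal, diagonal_mul] at h1
      have h2 : c j * M i j = e i * M i j := by rw [mul_comm (c j)]; exact h1
      exact (mul_right_cancel₀ hMij h2).symm
    have hcol : ∀ j, ∃ i, M i j ≠ 0 := by
      intro j
      by_contra hcon
      push_neg at hcon
      have h1 : ((↑g⁻¹ : Matrix (Fin l) (Fin l) F) * M) j j = 1 := by
        rw [← Units.val_mul, inv_mul_cancel]
        simp [Matrix.one_apply]
      rw [Matrix.mul_apply] at h1
      simp only [hcon, mul_zero, Finset.sum_const_zero] at h1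
      exact zero_ne_one h1
    choose r hr using hcol
    have hrinj : Function.Injective r := by
      intro j1 j2 hj
      apply hcinj
      rw [← key _ _ (hr j1), hj, key _ _ (hr j2)]
    have hrbij : Function.Bijective r := Finite.injective_iff_bijective.mp hrinj
    set σ : Equiv.Perm (Fin l) := Equiv.ofBijective r hrbij with hσdef
    have hσa : ∀ j, σ j = r j := fun j => rfl
    have hσe : ∀ j, e (σ j) = c j := fun j => by rw [hσa]; exact key _ _ (hr j)
    have hzero : ∀ i j, i ≠ σ j → M i j = 0 := by
      intro i j hne
      by_contra hMij
      have h1 : e i = c j := key i j hMij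
      have h2 : e i = c (σ.symm i) := by
        have := hσe (σ.symm i); rwa [σ.apply_symm_apply] at this
      have h3 : σ.symm i = j := hcinj (h2.symm.trans h1)
      exact hne (by rw [← h3, σ.apply_symm_apply])
    have hu : g * (permGL l F σ)⁻¹ ∈ diagGL l F := by
      rw [mem_diagGL_iff]
      intro i j hij
      have hval : (↑(g * (permGL l F σ)⁻¹) : Matrix (Fin l) (Fin l) F)
          = M * permMat l F σ⁻¹ := by
        rw [permGL_inv, Units.val_mul]; rfl
      rw [hval, mul_permMat_apply]
      exact hzero i (σ⁻¹ j) (by rw [Equiv.Perm.inv_def, Equiv.apply_symm_apply]; exact hij)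
    refine ⟨piPGL l F (g * (permGL l F σ)⁻¹), ⟨_, hu, rfl⟩,
      piPGL l F (permGL l F σ), ⟨permGL l F σ, ⟨σ, rfl⟩, rfl⟩, ?_⟩
    show piPGL l F g = piPGL l F (g * (permGL l F σ)⁻¹) * piPGL l F (permGL l F σ)
    rw [← _root_.map_mul, inv_mul_cancel_right]
end

section
/- Let F be a field, l ≥ 2 an integer, and ω ∈ F with ω^l = −1 (in particular ω is a unit). In the matrix ring M_l(F), for 1 ≤ i ≤ l−1 and t ∈ F^×, define n_i(t) := (1 + t·E_{i,i+1})·(1 − t^{-1}·E_{i+1,i})·(1 + t·E_{i,i+1}) and h_i(t) := n_i(t)·n_i(−1), where E_{ij} are the standard matrix units and 1 is the identity matrix. Then n_1(1)·h_1(−ω)·h_2(−ω²)·⋯·h_{l−1}(−ω^{l−1}) = ω·P, where P is the permutation matrix of the transposition exchanging 1 and 2 (i.e. P coincides with the identity matrix except that its upper-left 2×2 block is [[0,1],[1,0]]). In particular, this product is a scalar multiple of the permutation matrix of (1 2), hence equal to it modulo the scalar matrices. -/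
open Matrix

noncomputable section

variable (l : ℕ) (F : Type) [Field F]

/-- The matrix unit `E_{ab}` (1-based indices `a, b ∈ {1,…,l}`, here encoded 0-based). -/
def matUnit (a b : ℕ) : Matrix (Fin l) (Fin l) F :=
  Matrix.of fun i j => if (i : ℕ) = a ∧ (j : ℕ) = b then 1 else 0

/-- The Chevalley element `n_i(t) = (1 + t·E_{i,i+1})(1 − t⁻¹·E_{i+1,i})(1 + t·E_{i,i+1})`
of `SL_l`, for `1 ≤ i ≤ l − 1` (1-based index `i`, so positions `i, i+1` are `i−1, i`
in 0-based encoding). -/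
def nElt (i : ℕ) (t : F) : Matrix (Fin l) (Fin l) F :=
  (1 + t • matUnit l F (i - 1) i) * (1 - t⁻¹ • matUnit l F i (i - 1)) *
    (1 + t • matUnit l F (i - 1) i)

/-- The Chevalley element `h_i(t) = n_i(t)·n_i(−1)`. -/
def hElt (i : ℕ) (t : F) : Matrix (Fin l) (Fin l) F :=
  nElt l F i t * nElt l F i (-1)

end


section Helpers

open Matrix

variable (l : ℕ) (F : Type) [Field F]

lemma matUnit_eq (a b : Fin l) : matUnit l F a b = Matrix.single a b (1 : F) := by
  ext i j
  simp [matUnit, Matrix.single, Fin.ext_iff, and_comm, eq_comm]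

lemma nElt_eq (a b : Fin l) (hab : a ≠ b) (t : F) (ht : t ≠ 0)
    (h1 : ((a : ℕ) + 1 : ℕ) = b) :
    nElt l F b t =
      1 + Matrix.single a b t - Matrix.single b a t⁻¹
        - Matrix.single a a 1 - Matrix.single b b 1 := by
  have h2 : ((b : ℕ) - 1 : ℕ) = a := by omega
  rw [nElt, h2, matUnit_eq l F a b, matUnit_eq l F b a,
    smul_single, smul_single]
  simp only [smul_eq_mul, mul_one]
  have m1 : ∀ c d : F, Matrix.single a b c * Matrix.single a b d = 0 :=
    fun c d => single_mul_single_of_ne (c := c) a b a hab.symm d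
  have m2 : ∀ c d : F, Matrix.single b a c * Matrix.single b a d = 0 :=
    fun c d => single_mul_single_of_ne (c := c) b a b hab d
  noncomm_ring
  simp [single_mul_single_same, m1, m2, inv_mul_cancel₀ ht, mul_inv_cancel₀ ht, two_mul,
    single_add]
  abel

set_option maxHeartbeats 1000000 in
lemma hElt_eq (a b : Fin l) (hab : a ≠ b) (t : F) (ht : t ≠ 0)
    (h1 : ((a : ℕ) + 1 : ℕ) = b) :
    hElt l F b t = diagonal (fun j => if j = a then t else if j = b then t⁻¹ else 1) := by
  have hd : diagonal (fun j => if j = a then t else if j = b then t⁻¹ else 1) =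
      1 + Matrix.single a a (t - 1) + Matrix.single b b (t⁻¹ - 1) := by
    ext i j
    simp only [diagonal_apply, Matrix.single, Matrix.add_apply, Matrix.one_apply, of_apply]
    split_ifs
    all_goals try casesm* _ ∧ _
    all_goals subst_vars
    all_goals first | rfl | ring1 | (exact absurd rfl hab) | (exact absurd rfl ‹¬_›) |
      (exfalso; omega) | (simp_all; ring1)
  rw [hd, hElt, nElt_eq l F a b hab t ht h1, nElt_eq l F a b hab (-1) (by norm_num) h1]
  have za : ∀ (i : Fin l) (c : F) (j : Fin l) (d : F),
      Matrix.single i a c * Matrix.single b j d = 0 :=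
    fun i c j d => single_mul_single_of_ne (c := c) i a b hab d
  have zb : ∀ (i : Fin l) (c : F) (j : Fin l) (d : F),
      Matrix.single i b c * Matrix.single a j d = 0 :=
    fun i c j d => single_mul_single_of_ne (c := c) i b a hab.symm d
  noncomm_ring
  simp only [single_mul_single_same, za, zb, inv_mul_cancel₀ ht, mul_inv_cancel₀ ht,
    smul_eq_mul, neg_smul, one_smul, smul_single, mul_one, inv_neg, inv_one,
    mul_neg, neg_neg, add_zero, zero_add]
  ext i j
  simp only [Matrix.single, Matrix.add_apply, Matrix.neg_apply, Matrix.smul_apply,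
    Matrix.one_apply, of_apply, smul_eq_mul, Matrix.zero_apply, nsmul_eq_mul,
    Nat.cast_ofNat, neg_zero, add_zero, zero_add, mul_one, neg_neg]
  split_ifs
  all_goals try casesm* _ ∧ _
  all_goals subst_vars
  all_goals first | rfl | ring1 | (exact absurd rfl hab) | (exact absurd rfl ‹¬_›) |
    (exfalso; omega) | (simp_all; ring1)

/-- The running diagonal of the partial products of the `hElt`s. -/
def dFun (ω : F) (m : ℕ) : Fin l → F := fun i =>
  if (i : ℕ) < m then (if (i : ℕ) = 0 then -ω else ω)
  else if (i : ℕ) = m ∧ 0 < m then -(ω ^ m)⁻¹ else 1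

lemma prod_hElt (ω : F) (hω0 : ω ≠ 0) (m : ℕ) (hm : m ≤ l - 1) (hl : 2 ≤ l) :
    ((List.range m).map (fun k => hElt l F (k + 1) (-ω ^ (k + 1)))).prod =
      diagonal (dFun l F ω m) := by
  induction m with
  | zero =>
      rw [show dFun l F ω 0 = fun _ => 1 from funext fun i => by simp [dFun], diagonal_one]
      simp
  | succ m ih =>
      have hm' : m ≤ l - 1 := by omega
      have hb : m + 1 < l := by omega
      have ha : m < l := by omega
      rw [List.range_succ, List.map_append, List.prod_append, ih hm']
      have ht : (-ω ^ (m + 1)) ≠ 0 := by simp [hω0]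
      have key := hElt_eq l F ⟨m, ha⟩ ⟨m + 1, hb⟩ (by simp [Fin.ext_iff]) _ ht (by simp)
      simp only [List.map_cons, List.map_nil, List.prod_cons, List.prod_nil, mul_one]
      rw [show hElt l F (m + 1) (-ω ^ (m + 1)) =
        hElt l F ((⟨m + 1, hb⟩ : Fin l) : ℕ) (-ω ^ (m + 1)) from rfl, key,
        diagonal_mul_diagonal]
      refine congrArg diagonal (funext fun i => ?_)
      show dFun l F ω m i *
        (if i = ⟨m, ha⟩ then -ω ^ (m + 1) else if i = ⟨m + 1, hb⟩ then (-ω ^ (m + 1))⁻¹ else 1) =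
        dFun l F ω (m + 1) i
      simp only [dFun, Fin.ext_iff, Fin.val_mk]
      split_ifs <;>
        first
          | rfl
          | ring1
          | (exfalso; omega)
          | (rw [inv_neg]; ring1)
          | (field_simp; ring1)
          | (simp only [show m = 0 by omega, pow_zero]; ring1)
          | (field_simp; simp only [show m = 0 by omega, pow_zero]; ring1)

end Helpers

set_option maxHeartbeats 1000000 in
/-- For `ω ∈ F` with `ω^l = −1`,
`n_1(1)·h_1(−ω)·h_2(−ω²)⋯h_{l−1}(−ω^{l−1}) = ω·P`, where `P` is the permutation matrix of the
transposition `(1 2)`; in particular this product equals `P` modulo scalar matrices. -/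
theorem chevalley_product_eq_smul_transposition
    (F : Type) [Field F] (l : ℕ) (hl : 2 ≤ l) (ω : F) (hω : ω ^ l = -1) :
    nElt l F 1 1 *
        ((List.range (l - 1)).map (fun k => hElt l F (k + 1) (-ω ^ (k + 1)))).prod =
      ω • permMat l F (Equiv.swap (⟨0, by omega⟩ : Fin l) ⟨1, by omega⟩) := by
  have hl0 : l ≠ 0 := by omega
  have hω0 : ω ≠ 0 := by
    intro h
    rw [h, zero_pow hl0] at hω
    exact one_ne_zero (by linear_combination hω)
  rw [prod_hElt l F ω hω0 (l - 1) le_rfl hl]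
  have hl1 : ω ^ (l - 1) * ω = -1 := by
    rw [← pow_succ, show l - 1 + 1 = l by omega, hω]
  have hD : dFun l F ω (l - 1) = fun i : Fin l => if (i : ℕ) = 0 then -ω else ω := by
    funext i
    have hil : (i : ℕ) < l := i.isLt
    simp only [dFun]
    rcases lt_or_ge (i : ℕ) (l - 1) with h | h
    · rw [if_pos h]
    · have h' : (i : ℕ) = l - 1 := by omega
      rw [if_neg (by omega), if_pos ⟨h', by omega⟩, if_neg (by omega)]
      field_simp
      linear_combination -hl1
  rw [hD]
  have hn := nElt_eq l F ⟨0, by omega⟩ ⟨1, by omega⟩ (by simp [Fin.ext_iff]) 1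
    one_ne_zero (by simp)
  rw [show nElt l F 1 1 = nElt l F ((⟨1, by omega⟩ : Fin l) : ℕ) 1 from rfl, hn]
  ext i j
  rw [mul_diagonal]
  simp only [permMat, Matrix.smul_apply, Matrix.of_apply, Matrix.single, Matrix.sub_apply,
    Matrix.add_apply, Matrix.one_apply, Equiv.swap_apply_def, smul_eq_mul, inv_one]
  split_ifs
  all_goals try casesm* _ ∧ _
  all_goals subst_vars
  all_goals first
    | rfl
    | ring1
    | (exfalso; simp only [Fin.ext_iff, Fin.val_mk, eq_self_iff_true, and_self, not_true_eq_false] at *; done)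
    | (exfalso; simp only [ne_eq, not_and, Fin.ext_iff, Fin.val_mk] at *; omega)
    | (exfalso; simp_all; done)
end
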